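/- Every 𝓗-completion of the discrete semilattice (ℕ, min) is topologically isomorphic to ℕ_{ℱ,min} for some free filter ℱ on ℕ. That is, if S is an 𝓗-complete Hausdorff topological semilattice containing (ℕ, min) with the discrete topology as a dense subsemilattice, then there is a free filter ℱ on ℕ and an isomorphism of topological semilattices S ≅ ℕ_{ℱ,min}. -/

import Mathlib

open Topology Set

/-- A filter is free if the intersection of all its members is empty. -/
def FreeF (F : Filter ℕ) : Prop := ⋂₀ F.sets = ∅

/-- The topology on ℕ_ℱ = ℕ ∪ {ℱ} (modelled as `Option ℕ`, with `none` the point ℱ):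
all points of ℕ are isolated, and the sets F ∪ {ℱ}, F ∈ ℱ, form a neighbourhood base at ℱ. -/
def nfTop (F : Filter ℕ) : TopologicalSpace (Option ℕ) where
  IsOpen U := none ∈ U → {n : ℕ | some n ∈ U} ∈ F
  isOpen_univ := fun _ => by simp
  isOpen_inter := fun U V hU hV h => Filter.inter_mem (hU h.1) (hV h.2)
  isOpen_sUnion := fun S hS h => by
    obtain ⟨U, hUS, hnU⟩ := h
    exact Filter.mem_of_superset (hS U hUS hnU) fun n hn => ⟨U, hUS, hn⟩

/-- min on ℕ extended to ℕ_ℱ by min(n,ℱ) = n, min(ℱ,ℱ) = ℱ. -/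
def minOp : Option ℕ → Option ℕ → Option ℕ
  | none, y => y
  | some a, none => some a
  | some a, some b => some (min a b)

/-- max on ℕ extended to ℕ_ℱ by max(n,ℱ) = ℱ = max(ℱ,ℱ). -/
def maxOp : Option ℕ → Option ℕ → Option ℕ
  | none, _ => none
  | _, none => none
  | some a, some b => some (max a b)

/-- `X` with operation `op` is a (Hausdorff) topological semilattice. -/
structure IsTopSemilattice (X : Type*) [TopologicalSpace X] (op : X → X → X) : Prop where
  t2 : T2Space X
  comm : ∀ a b, op a b = op b a
  idem : ∀ a, op a a = a
  assoc : ∀ a b c, op (op a b) c = op a (op b c)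
  cont : Continuous fun p : X × X => op p.1 p.2

/-- 𝓗-completeness: the image under any topological embedding which is a semilattice
homomorphism into a Hausdorff topological semilattice is closed. -/
def HComplete (X : Type*) [TopologicalSpace X] (op : X → X → X) : Prop :=
  ∀ (Y : Type*) [TopologicalSpace Y] (opY : Y → Y → Y), IsTopSemilattice Y opY →
    ∀ f : X → Y, Topology.IsEmbedding f →
      (∀ a b, f (op a b) = opY (f a) (f b)) → IsClosed (Set.range f)

/-- 𝓐𝓗-completeness: the image under any continuous semilattice homomorphism
into a Hausdorff topological semilattice is closed. -/
def AHComplete (X : Type*) [TopologicalSpace X] (op : X → X → X) : Prop :=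
  ∀ (Y : Type*) [TopologicalSpace Y] (opY : Y → Y → Y), IsTopSemilattice Y opY →
    ∀ f : X → Y, Continuous f →
      (∀ a b, f (op a b) = opY (f a) (f b)) → IsClosed (Set.range f)


lemma nf_isOpen {F : Filter ℕ} {U : Set (Option ℕ)} :
    IsOpen[nfTop F] U ↔ (none ∈ U → {n : ℕ | some n ∈ U} ∈ F) := Iff.rfl

lemma nf_open_nonone {F : Filter ℕ} {U : Set (Option ℕ)} (h : none ∉ U) :
    IsOpen[nfTop F] U := fun hn => absurd hn h

lemma nf_open_cone {F : Filter ℕ} {A : Set ℕ} (hA : A ∈ F) :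
    IsOpen[nfTop F] ({none} ∪ some '' A) := by
  intro _
  exact Filter.mem_of_superset hA fun n hn => Or.inr ⟨n, hn, rfl⟩

lemma minOp_comm : ∀ a b, minOp a b = minOp b a := by
  intro a b; cases a <;> cases b <;> simp [minOp, min_comm]

lemma minOp_idem : ∀ a, minOp a a = a := by
  intro a; cases a <;> simp [minOp]

lemma minOp_assoc : ∀ a b c, minOp (minOp a b) c = minOp a (minOp b c) := by
  intro a b c; cases a <;> cases b <;> cases c <;> simp [minOp, min_assoc]

lemma nf_nhds_some (F : Filter ℕ) (n : ℕ) : @nhds _ (nfTop F) (some n) = pure (some n) := by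
  letI : TopologicalSpace (Option ℕ) := nfTop F
  refine le_antisymm (fun U hU => ?_) (pure_le_nhds _)
  rw [Filter.mem_pure] at hU
  exact (nf_open_nonone (by simp : (none : Option ℕ) ∉ {some n})).mem_nhds rfl
    |> fun h => Filter.mem_of_superset h (by simpa using hU)

lemma atTop_t2 : @T2Space (Option ℕ) (nfTop Filter.atTop) := by
  letI : TopologicalSpace (Option ℕ) := nfTop Filter.atTop
  constructor
  intro x y hxy
  match x, y with
  | some m, some n =>
      exact ⟨{some m}, {some n}, nf_open_nonone (by simp), nf_open_nonone (by simp),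
        rfl, rfl, by simp [Set.disjoint_left]; intro h; simp_all⟩
  | some m, none =>
      refine ⟨{some m}, {none} ∪ some '' (Set.Ioi m), nf_open_nonone (by simp),
        nf_open_cone (Filter.Ioi_mem_atTop m), rfl, Or.inl rfl, ?_⟩
      rw [Set.disjoint_left]
      rintro a ha (h | ⟨k, hk, hk2⟩) <;> simp_all
  | none, some n =>
      refine ⟨{none} ∪ some '' (Set.Ioi n), {some n},
        nf_open_cone (Filter.Ioi_mem_atTop n), nf_open_nonone (by simp), Or.inl rfl, rfl, ?_⟩
      rw [Set.disjoint_left]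
      rintro a (h | ⟨k, hk, hk2⟩) ha <;> simp_all
  | none, none => exact absurd rfl hxy

lemma atTop_minOp_cont :
    @Continuous _ _ (@instTopologicalSpaceProd _ _ (nfTop Filter.atTop) (nfTop Filter.atTop))
      (nfTop Filter.atTop) (fun p : Option ℕ × Option ℕ => minOp p.1 p.2) := by
  letI : TopologicalSpace (Option ℕ) := nfTop Filter.atTop
  rw [continuous_iff_continuousAt]
  rintro ⟨x, y⟩
  unfold ContinuousAt
  rw [nhds_prod_eq]
  match x, y with
  | some m, some n =>
      rw [nf_nhds_some, nf_nhds_some, Filter.pure_prod]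
      exact (tendsto_pure_nhds (fun q : Option ℕ × Option ℕ => minOp q.1 q.2) ((some m, some n) : Option ℕ × Option ℕ))
  | some m, none =>
      intro U hU
      rw [Filter.mem_map]
      have h1 : ({some m} : Set (Option ℕ)) ∈ @nhds _ (nfTop Filter.atTop) (some m) :=
        (nf_open_nonone (by simp)).mem_nhds rfl
      have h2 : ({none} ∪ some '' (Set.Ici m)) ∈ @nhds _ (nfTop Filter.atTop) none :=
        (nf_open_cone (Filter.Ici_mem_atTop m)).mem_nhds (Or.inl rfl)
      refine Filter.mem_of_superset (Filter.prod_mem_prod h1 h2) ?_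
      rintro ⟨a, b⟩ ⟨ha, hb⟩
      simp only [Set.mem_singleton_iff] at ha
      subst ha
      rcases hb with hb | ⟨k, hk, rfl⟩
      · simp only [Set.mem_singleton_iff] at hb; subst hb
        simpa [minOp] using mem_of_mem_nhds hU
      · have : minOp (some m) (some k) = some m := by simp [minOp, min_eq_left (Set.mem_Ici.1 hk)]
        simp only [Set.mem_preimage, this]
        exact mem_of_mem_nhds hU
  | none, some n =>
      intro U hU
      rw [Filter.mem_map]
      have h1 : ({none} ∪ some '' (Set.Ici n)) ∈ @nhds _ (nfTop Filter.atTop) none :=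
        (nf_open_cone (Filter.Ici_mem_atTop n)).mem_nhds (Or.inl rfl)
      have h2 : ({some n} : Set (Option ℕ)) ∈ @nhds _ (nfTop Filter.atTop) (some n) :=
        (nf_open_nonone (by simp)).mem_nhds rfl
      refine Filter.mem_of_superset (Filter.prod_mem_prod h1 h2) ?_
      rintro ⟨a, b⟩ ⟨ha, hb⟩
      simp only [Set.mem_singleton_iff] at hb
      subst hb
      rcases ha with ha | ⟨k, hk, rfl⟩
      · simp only [Set.mem_singleton_iff] at ha; subst ha
        simpa [minOp] using mem_of_mem_nhds hU
      · have : minOp (some k) (some n) = some n := by simp [minOp, min_eq_right (Set.mem_Ici.1 hk)]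
        simp only [Set.mem_preimage, this]
        exact mem_of_mem_nhds hU
  | none, none =>
      intro U hU
      rw [Filter.mem_map]
      simp only [minOp] at hU
      obtain ⟨V, hVU, hVopen, hnV⟩ := mem_nhds_iff.1 hU
      have hA : {n : ℕ | some n ∈ V} ∈ Filter.atTop := hVopen hnV
      obtain ⟨N, hN⟩ := Filter.mem_atTop_sets.1 hA
      have hW : ({none} ∪ some '' (Set.Ici N)) ∈ @nhds _ (nfTop Filter.atTop) none :=
        (nf_open_cone (Filter.Ici_mem_atTop N)).mem_nhds (Or.inl rfl)
      refine Filter.mem_of_superset (Filter.prod_mem_prod hW hW) ?_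
      rintro ⟨a, b⟩ ⟨ha, hb⟩
      have key : ∀ z : Option ℕ, z ∈ ({none} ∪ some '' (Set.Ici N) : Set (Option ℕ)) →
          z = none ∨ ∃ k, N ≤ k ∧ z = some k := by
        rintro z (hz | ⟨k, hk, rfl⟩)
        · exact Or.inl hz
        · exact Or.inr ⟨k, hk, rfl⟩
      simp only [Set.mem_preimage]
      rcases key a ha with rfl | ⟨k, hk, rfl⟩ <;> rcases key b hb with rfl | ⟨l, hl, rfl⟩
      · exact hVU hnV
      · exact hVU (hN l hl)
      · exact hVU (hN k hk)
      · exact hVU (hN _ (le_min hk hl))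

lemma atTop_topSemilattice : @IsTopSemilattice (Option ℕ) (nfTop Filter.atTop) minOp :=
  letI : TopologicalSpace (Option ℕ) := nfTop Filter.atTop
  ⟨atTop_t2, minOp_comm, minOp_idem, minOp_assoc, atTop_minOp_cont⟩

lemma absorb {S : Type} [TopologicalSpace S] {op : S → S → S}
    (hS : IsTopSemilattice S op)
    {ι : ℕ → S} (hemb : Topology.IsEmbedding ι)
    (hhom : ∀ m n : ℕ, ι (min m n) = op (ι m) (ι n))
    (hdense : DenseRange ι) {x : S} (hx : x ∉ Set.range ι) :
    ∀ s, op s x = s := by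
  haveI := hS.t2
  have contl : ∀ y : S, Continuous fun s => op y s :=
    fun y => hS.cont.comp (continuous_const.prodMk continuous_id)
  have contr : ∀ y : S, Continuous fun s => op s y :=
    fun y => hS.cont.comp (continuous_id.prodMk continuous_const)
  have key1 : ∀ n : ℕ, ∀ s : S, op (ι n) s ∈ ι '' Set.Iic n := by
    intro n
    have hC : IsClosed (ι '' Set.Iic n) := ((Set.finite_Iic n).image ι).isClosed
    have hsub : Set.range ι ⊆ (fun s => op (ι n) s) ⁻¹' (ι '' Set.Iic n) := by
      rintro _ ⟨m, rfl⟩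
      exact ⟨min n m, Set.mem_Iic.2 (min_le_left _ _), hhom n m⟩
    have hcl : closure (Set.range ι) ⊆ (fun s => op (ι n) s) ⁻¹' (ι '' Set.Iic n) :=
      closure_minimal hsub (hC.preimage (contl (ι n)))
    intro s
    exact hcl (by rw [hdense.closure_range]; trivial)
  have hk : ∀ n : ℕ, ∃ m, m ≤ n ∧ op (ι n) x = ι m := by
    intro n
    obtain ⟨m, hm, hmeq⟩ := key1 n x
    exact ⟨m, hm, hmeq.symm⟩
  set k : ℕ → ℕ := fun n => (hk n).choose with hkdef
  have hk1 : ∀ n, k n ≤ n := fun n => (hk n).choose_spec.1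
  have hk2 : ∀ n, op (ι n) x = ι (k n) := fun n => (hk n).choose_spec.2
  have key2 : ∀ m n, k (min m n) = min m (k n) := by
    intro m n
    apply hemb.injective
    calc ι (k (min m n)) = op (ι (min m n)) x := (hk2 _).symm
      _ = op (op (ι m) (ι n)) x := by rw [hhom]
      _ = op (ι m) (op (ι n) x) := hS.assoc _ _ _
      _ = op (ι m) (ι (k n)) := by rw [hk2]
      _ = ι (min m (k n)) := (hhom _ _).symm
  by_cases hcase : ∀ n, k n = n
  · have habs : ∀ n, op (ι n) x = ι n := fun n => (hk2 n).trans (congrArg ι (hcase n))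
    have hE : IsClosed {s | op s x = s} := isClosed_eq (contr x) continuous_id
    have hsub : Set.range ι ⊆ {s | op s x = s} := by
      rintro _ ⟨n, rfl⟩; exact habs n
    intro s
    have : closure (Set.range ι) ⊆ {s | op s x = s} := closure_minimal hsub hE
    exact this (by rw [hdense.closure_range]; trivial)
  · exfalso
    push_neg at hcase
    obtain ⟨N, hN⟩ := hcase
    have hlt : k N < N := lt_of_le_of_ne (hk1 N) hN
    have hconst : ∀ m, N ≤ m → k m = k N := by
      intro m hm
      have h1 : k N = min m (k N) := by rw [← key2 m N, min_eq_right hm]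
      have h2 : k N = min N (k m) := by rw [← key2 N m, min_eq_left hm]
      rcases le_or_gt N (k m) with h | h
      · rw [min_eq_left h] at h2; omega
      · rw [min_eq_right h.le] at h2; omega
    have hru : Set.range ι = ι '' Set.Iio N ∪ ι '' Set.Ici N := by
      rw [← Set.image_union, Set.Iio_union_Ici, Set.image_univ]
    have hxc : x ∈ ι '' Set.Iio N ∪ closure (ι '' Set.Ici N) := by
      have h0 : x ∈ closure (Set.range ι) := hdense x
      rw [hru, closure_union, (((Set.finite_Iio N).image ι).isClosed).closure_eq] at h0
      exact h0
    have hxcl : x ∈ closure (ι '' Set.Ici N) := by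
      rcases hxc with h | h
      · exact absurd (Set.image_subset_range ι _ h) hx
      · exact h
    have hD : IsClosed {s | op s x = ι (k N)} := isClosed_eq (contr x) continuous_const
    have hsub : ι '' Set.Ici N ⊆ {s | op s x = ι (k N)} := by
      rintro _ ⟨m, hm, rfl⟩
      show op (ι m) x = ι (k N)
      rw [hk2 m, hconst m hm]
    have hxD : op x x = ι (k N) := closure_minimal hsub hD hxcl
    exact hx ⟨k N, ((hS.idem x).symm.trans hxD).symm⟩

lemma HComplete.out {S : Type} [TopologicalSpace S] {op : S → S → S} (hHC : HComplete S op)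
    (Y : Type) [TopologicalSpace Y] (opY : Y → Y → Y) (hY : IsTopSemilattice Y opY)
    (f : S → Y) (hf : Topology.IsEmbedding f)
    (hfh : ∀ a b, f (op a b) = opY (f a) (f b)) :
    IsClosed (Set.range f) := by
  haveI := hY.t2
  set opY' : ULift Y → ULift Y → ULift Y := fun a b => ULift.up (opY a.down b.down) with hopY'
  have hY' : IsTopSemilattice (ULift Y) opY' := by
    refine ⟨Homeomorph.ulift.isEmbedding.t2Space, ?_, ?_, ?_, ?_⟩
    · intro a b; cases a; cases b; simp [hopY', hY.comm]
    · intro a; cases a; simp [hopY', hY.idem]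
    · intro a b c; cases a; cases b; cases c; simp [hopY', hY.assoc]
    · have h1 : Continuous fun p : ULift Y × ULift Y => opY p.1.down p.2.down :=
        hY.cont.comp ((Homeomorph.ulift.continuous.comp continuous_fst).prodMk
          (Homeomorph.ulift.continuous.comp continuous_snd))
      exact Homeomorph.ulift.symm.continuous.comp h1
  set f' : S → ULift Y := fun s => ULift.up (f s) with hf'
  have hf'emb : Topology.IsEmbedding f' := Homeomorph.ulift.symm.isEmbedding.comp hf
  have hcl' : IsClosed (Set.range f') :=
    hHC (ULift Y) opY' hY' f' hf'emb (fun a b => by simp [hf', hopY', hfh])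
  have : Set.range f = ULift.up ⁻¹' (Set.range f') := by
    ext y
    constructor
    · rintro ⟨s, rfl⟩; exact ⟨s, rfl⟩
    · rintro ⟨s, hs⟩
      exact ⟨s, congrArg ULift.down hs⟩
  rw [this]
  exact hcl'.preimage Homeomorph.ulift.symm.continuous

lemma exists_outside {S : Type} [TopologicalSpace S] {op : S → S → S}
    (hHC : HComplete S op)
    {ι : ℕ → S} (hemb : Topology.IsEmbedding ι)
    (hhom : ∀ m n : ℕ, ι (min m n) = op (ι m) (ι n)) :
    ∃ x : S, x ∉ Set.range ι := by
  by_contra hsurj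
  push_neg at hsurj
  have hsurj' : Function.Surjective ι := fun s => hsurj s
  have hinj := hemb.injective
  have hsing : ∀ n : ℕ, IsOpen ({ι n} : Set S) := by
    intro n
    have h1 : IsOpen ({n} : Set ℕ) := isOpen_discrete _
    rw [hemb.isInducing.eq_induced] at h1
    obtain ⟨V, hV, hVn⟩ := isOpen_induced_iff.1 h1
    have : V = {ι n} := by
      apply Set.eq_singleton_iff_unique_mem.2
      constructor
      · have : n ∈ ι ⁻¹' V := by rw [hVn]; rfl
        exact this
      · rintro v hv
        obtain ⟨m, rfl⟩ := hsurj' v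
        have : m ∈ ι ⁻¹' V := hv
        rw [hVn] at this
        simp only [Set.mem_singleton_iff] at this
        rw [this]
    rwa [this] at hV
  letI : TopologicalSpace (Option ℕ) := nfTop Filter.atTop
  set f : S → Option ℕ := fun s => some (Function.invFun ι s) with hfdef
  have hri : ∀ s, ι (Function.invFun ι s) = s := Function.rightInverse_invFun hsurj'
  have hli : ∀ n, Function.invFun ι (ι n) = n := Function.leftInverse_invFun hinj
  have hfinj : Function.Injective f := by
    intro a b hab
    have : Function.invFun ι a = Function.invFun ι b := Option.some_injective _ hab
    rw [← hri a, ← hri b, this]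
  have hnhdsS : ∀ s : S, nhds s = pure s := by
    intro s
    obtain ⟨n, rfl⟩ := hsurj' s
    refine le_antisymm (fun U hU => ?_) (pure_le_nhds _)
    rw [Filter.mem_pure] at hU
    exact Filter.mem_of_superset ((hsing n).mem_nhds rfl) (by simpa using hU)
  have hfemb : Topology.IsEmbedding f := by
    refine ⟨Topology.isInducing_iff_nhds.2 fun s => ?_, hfinj⟩
    rw [hnhdsS s, hfdef]
    show pure s = Filter.comap f (nhds (some (Function.invFun ι s)))
    rw [nf_nhds_some, Filter.comap_pure]
    have : f ⁻¹' {some (Function.invFun ι s)} = {s} := by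
      ext t
      simp only [Set.mem_preimage, Set.mem_singleton_iff, hfdef]
      constructor
      · intro h
        have h2 : Function.invFun ι t = Function.invFun ι s := Option.some_injective _ h
        rw [← hri t, ← hri s, h2]
      · rintro rfl; rfl
    rw [this, ← Filter.principal_singleton]
  have hfhom : ∀ a b, f (op a b) = minOp (f a) (f b) := by
    intro a b
    obtain ⟨m, rfl⟩ := hsurj' a
    obtain ⟨n, rfl⟩ := hsurj' b
    rw [← hhom m n, hfdef]
    show some (Function.invFun ι (ι (min m n))) = minOp (some (Function.invFun ι (ι m))) (some (Function.invFun ι (ι n)))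
    rw [hli, hli, hli]
    simp [minOp]
  have hcl : IsClosed (Set.range f) := hHC.out (Option ℕ) minOp atTop_topSemilattice f hfemb hfhom
  have hmem : (none : Option ℕ) ∈ closure (Set.range f) := by
    rw [mem_closure_iff]
    intro U hU hnU
    have hA : {n : ℕ | some n ∈ U} ∈ Filter.atTop := hU hnU
    obtain ⟨n, hn⟩ := Filter.nonempty_of_mem hA
    exact ⟨some n, hn, ι n, by rw [hfdef]; show some (Function.invFun ι (ι n)) = some n; rw [hli]⟩
  rw [hcl.closure_eq] at hmem
  obtain ⟨s, hs⟩ := hmem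
  exact absurd hs (Option.some_ne_none _)

/-- every 𝓗-completion of the discrete semilattice (ℕ, min) is
topologically isomorphic to ℕ_{ℱ,min} for some free filter ℱ on ℕ. -/
theorem hCompletion_min_iso (S : Type) [TopologicalSpace S] (op : S → S → S)
    (hS : IsTopSemilattice S op) (hHC : HComplete S op)
    (ι : ℕ → S) (hemb : Topology.IsEmbedding ι)
    (hhom : ∀ m n : ℕ, ι (min m n) = op (ι m) (ι n))
    (hdense : DenseRange ι) :
    ∃ F : Filter ℕ, FreeF F ∧ ∃ e : S ≃ Option ℕ,
      @Continuous S (Option ℕ) _ (nfTop F) e ∧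
      @Continuous (Option ℕ) S (nfTop F) _ e.symm ∧
      ∀ a b : S, e (op a b) = minOp (e a) (e b) := by
  haveI := hS.t2
  obtain ⟨xF, hxF⟩ := exists_outside hHC hemb hhom
  have habs : ∀ s, op s xF = s := absorb hS hemb hhom hdense hxF
  have hcover : ∀ s : S, s ∈ Set.range ι ∨ s = xF := by
    intro s
    by_cases h : s ∈ Set.range ι
    · exact Or.inl h
    · right
      have habs' : ∀ t, op t s = t := absorb hS hemb hhom hdense h
      have h1 : op xF s = xF := habs' xF
      have h2 : op s xF = s := habs s
      rw [hS.comm] at h1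
      exact h2.symm.trans h1
  set g : Option ℕ → S := fun o => Option.elim o xF ι with hg
  have hgbij : Function.Bijective g := by
    constructor
    · rintro (_|m) (_|n) h
      · rfl
      · exact absurd ⟨n, h.symm⟩ hxF
      · exact absurd ⟨m, h⟩ hxF
      · exact congrArg some (hemb.injective h)
    · intro s
      rcases hcover s with ⟨n, rfl⟩ | rfl
      · exact ⟨some n, rfl⟩
      · exact ⟨none, rfl⟩
  set e : S ≃ Option ℕ := (Equiv.ofBijective g hgbij).symm with he
  have hes : ∀ o, e.symm o = g o := fun o => rfl
  have he1 : ∀ n, e (ι n) = some n := by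
    intro n
    rw [Equiv.apply_eq_iff_eq_symm_apply, hes]
    rfl
  have he2 : e xF = none := by
    rw [Equiv.apply_eq_iff_eq_symm_apply, hes]
    rfl
  set F : Filter ℕ := Filter.comap ι (nhds xF) with hF
  have hsing : ∀ n : ℕ, IsOpen ({ι n} : Set S) := by
    intro n
    have h1 : IsOpen ({n} : Set ℕ) := isOpen_discrete _
    rw [hemb.isInducing.eq_induced] at h1
    obtain ⟨V, hV, hVn⟩ := isOpen_induced_iff.1 h1
    have heq : {ι n} = V ∩ {xF}ᶜ := by
      ext v
      simp only [Set.mem_singleton_iff, Set.mem_inter_iff, Set.mem_compl_iff]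
      constructor
      · rintro rfl
        refine ⟨?_, fun h => hxF ⟨n, h⟩⟩
        have : n ∈ ι ⁻¹' V := by rw [hVn]; rfl
        exact this
      · rintro ⟨hv1, hv2⟩
        rcases hcover v with ⟨m, rfl⟩ | rfl
        · have : m ∈ ι ⁻¹' V := hv1
          rw [hVn] at this
          simp only [Set.mem_singleton_iff] at this
          rw [this]
        · exact absurd rfl hv2
    rw [heq]
    exact hV.inter isClosed_singleton.isOpen_compl
  refine ⟨F, ?_, e, ?_, ?_, ?_⟩
  · -- FreeF
    rw [FreeF, Set.eq_empty_iff_forall_notMem]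
    intro n hn
    rw [Set.mem_sInter] at hn
    have hmem : ι ⁻¹' ({ι n}ᶜ) ∈ F := by
      refine Filter.preimage_mem_comap (isClosed_singleton.isOpen_compl.mem_nhds ?_)
      simp only [Set.mem_compl_iff, Set.mem_singleton_iff]
      intro h
      exact hxF ⟨n, h.symm⟩
    exact (hn _ hmem) rfl
  · -- e continuous
    rw [continuous_def]
    intro U hU
    rw [isOpen_iff_mem_nhds]
    intro s hs
    rcases hcover s with ⟨n, rfl⟩ | rfl
    · exact Filter.mem_of_superset ((hsing n).mem_nhds rfl)
        (Set.singleton_subset_iff.2 hs)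
    · have hnU : none ∈ U := by rw [← he2]; exact hs
      have hA : {n | some n ∈ U} ∈ F := hU hnU
      obtain ⟨W, hW, hWA⟩ := Filter.mem_comap.1 hA
      refine Filter.mem_of_superset hW ?_
      intro w hw
      rcases hcover w with ⟨m, rfl⟩ | rfl
      · show e (ι m) ∈ U
        rw [he1]
        exact hWA hw
      · show e w ∈ U
        rw [he2]
        exact hnU
  · -- e.symm continuous
    rw [continuous_def]
    intro V hV
    show none ∈ e.symm ⁻¹' V → {n : ℕ | some n ∈ e.symm ⁻¹' V} ∈ F
    intro hn
    have hxFV : xF ∈ V := by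
      have : e.symm none ∈ V := hn
      rwa [hes] at this
    have : ι ⁻¹' V ∈ F := Filter.preimage_mem_comap (hV.mem_nhds hxFV)
    refine Filter.mem_of_superset this ?_
    intro m hm
    show e.symm (some m) ∈ V
    rw [hes]
    exact hm
  · -- homomorphism
    intro a b
    rcases hcover a with ⟨m, rfl⟩ | rfl <;> rcases hcover b with ⟨n, rfl⟩ | rfl
    · rw [← hhom, he1, he1, he1]; simp [minOp]
    · rw [habs (ι m), he1, he2]; simp [minOp]
    · rw [hS.comm, habs (ι n), he1, he2]; simp [minOp]
    · rw [hS.idem, he2]; simp [minOp]
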